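/- Let P satisfy Assumption (A) with constants ρ ∈ (0,1), C0 < ∞ and function V, and assume ⦀P^n − π⦀_V ≤ ρ^n for all n (absorbing the constant). Then for every k ≥ 2, ⦀L^(a_k) − π⦀_V ≤ exp(−u_k) ⦀L^(a_{k−1}) − π⦀_V, where u_k = log(a_k) − log(c + a_{k−1}) and c = 1/(1−ρ). -/

import Mathlib

open MeasureTheory Filter
open scoped ENNReal

namespace ResamplingContraction

variable {X : Type*} [MeasurableSpace X]

/-- `iter P n` is the `n`-step transition kernel `P^n`. -/
noncomputable def iter (P : X → Measure X) : ℕ → X → Measure X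
  | 0 => fun x => Measure.dirac x
  | n + 1 => fun x => (iter P n x).bind P

lemma measurable_iter (P : X → Measure X) (hP : Measurable P) :
    ∀ n, Measurable (iter P n)
  | 0 => Measure.measurable_dirac
  | n + 1 => (Measure.measurable_bind' hP).comp (measurable_iter P hP n)

lemma isProbabilityMeasure_bind {P : X → Measure X} (hP : Measurable P)
    (hPp : ∀ x, IsProbabilityMeasure (P x)) {μ : Measure X} (hμ : IsProbabilityMeasure μ) :
    IsProbabilityMeasure (μ.bind P) := by
  constructor
  rw [Measure.bind_apply MeasurableSet.univ hP.aemeasurable,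
    lintegral_congr fun y => (hPp y).measure_univ]
  simp [hμ.measure_univ]

lemma isProbabilityMeasure_iter {P : X → Measure X} (hP : Measurable P)
    (hPp : ∀ x, IsProbabilityMeasure (P x)) (n : ℕ) (x : X) :
    IsProbabilityMeasure (iter P n x) := by
  induction n with
  | zero => simp only [iter]; infer_instance
  | succ n ih => simp only [iter]; exact isProbabilityMeasure_bind hP hPp ih

lemma integral_bind {μ : Measure X} {κ : X → Measure X} (hκ : Measurable κ)
    {f : X → ℝ} (hf : Measurable f)
    (hfin : ∫⁻ y, ∫⁻ z, ‖f z‖₊ ∂(κ y) ∂μ ≠ ∞) :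
    ∫ z, f z ∂(μ.bind κ) = ∫ y, ∫ z, f z ∂(κ y) ∂μ := by
  have hnn : Measurable fun z => (‖f z‖₊ : ℝ≥0∞) := hf.nnnorm.coe_nnreal_ennreal
  have hbindnorm : ∫⁻ z, (‖f z‖₊ : ℝ≥0∞) ∂(μ.bind κ) = ∫⁻ y, ∫⁻ z, ‖f z‖₊ ∂(κ y) ∂μ :=
    Measure.lintegral_bind hκ.aemeasurable hnn.aemeasurable
  have hint : Integrable f (μ.bind κ) := by
    refine ⟨hf.aestronglyMeasurable, ?_⟩
    rw [HasFiniteIntegral]; change ∫⁻ z, (‖f z‖₊ : ℝ≥0∞) ∂(μ.bind κ) < ∞; rw [hbindnorm]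
    exact lt_top_iff_ne_top.mpr hfin
  have hpm : Measurable fun z => ENNReal.ofReal (f z) := hf.ennreal_ofReal
  have hqm : Measurable fun z => ENNReal.ofReal (-f z) := hf.neg.ennreal_ofReal
  have hple : ∀ z, ENNReal.ofReal (f z) ≤ (‖f z‖₊ : ℝ≥0∞) := fun z => by
    rw [← enorm_eq_nnnorm, ← ofReal_norm, Real.norm_eq_abs]
    exact ENNReal.ofReal_le_ofReal (le_abs_self _)
  have hqle : ∀ z, ENNReal.ofReal (-f z) ≤ (‖f z‖₊ : ℝ≥0∞) := fun z => by
    rw [← enorm_eq_nnnorm, ← ofReal_norm, Real.norm_eq_abs]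
    exact ENNReal.ofReal_le_ofReal (neg_le_abs _)
  have hmeasnorm : Measurable fun y => ∫⁻ z, (‖f z‖₊ : ℝ≥0∞) ∂(κ y) :=
    (Measure.measurable_lintegral hnn).comp hκ
  have hae : ∀ᵐ y ∂μ, ∫⁻ z, (‖f z‖₊ : ℝ≥0∞) ∂(κ y) < ∞ :=
    ae_lt_top hmeasnorm hfin
  have hPmeas' : Measurable fun y => ∫⁻ z, ENNReal.ofReal (f z) ∂(κ y) :=
    (Measure.measurable_lintegral hpm).comp hκ
  have hQmeas' : Measurable fun y => ∫⁻ z, ENNReal.ofReal (-f z) ∂(κ y) :=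
    (Measure.measurable_lintegral hqm).comp hκ
  have hPfin : ∫⁻ y, ∫⁻ z, ENNReal.ofReal (f z) ∂(κ y) ∂μ ≠ ∞ :=
    ne_top_of_le_ne_top hfin (lintegral_mono fun y => lintegral_mono hple)
  have hQfin : ∫⁻ y, ∫⁻ z, ENNReal.ofReal (-f z) ∂(κ y) ∂μ ≠ ∞ :=
    ne_top_of_le_ne_top hfin (lintegral_mono fun y => lintegral_mono hqle)
  have hinner : ∀ᵐ y ∂μ, ∫ z, f z ∂(κ y) =
      (∫⁻ z, ENNReal.ofReal (f z) ∂(κ y)).toReal -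
      (∫⁻ z, ENNReal.ofReal (-f z) ∂(κ y)).toReal := by
    filter_upwards [hae] with y hy
    exact integral_eq_lintegral_pos_part_sub_lintegral_neg_part
      ⟨hf.aestronglyMeasurable, hy⟩
  have hIP : Integrable (fun y => (∫⁻ z, ENNReal.ofReal (f z) ∂(κ y)).toReal) μ := by
    refine ⟨(ENNReal.measurable_toReal.comp hPmeas').aestronglyMeasurable, ?_⟩
    rw [HasFiniteIntegral]
    refine lt_of_le_of_lt (lintegral_mono fun y => ?_) (lt_top_iff_ne_top.mpr hPfin)
    rw [← ofReal_norm, Real.norm_eq_abs, abs_of_nonneg ENNReal.toReal_nonneg]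
    exact ENNReal.ofReal_toReal_le
  have hIQ : Integrable (fun y => (∫⁻ z, ENNReal.ofReal (-f z) ∂(κ y)).toReal) μ := by
    refine ⟨(ENNReal.measurable_toReal.comp hQmeas').aestronglyMeasurable, ?_⟩
    rw [HasFiniteIntegral]
    refine lt_of_le_of_lt (lintegral_mono fun y => ?_) (lt_top_iff_ne_top.mpr hQfin)
    rw [← ofReal_norm, Real.norm_eq_abs, abs_of_nonneg ENNReal.toReal_nonneg]
    exact ENNReal.ofReal_toReal_le
  have haeP : ∀ᵐ y ∂μ, ∫⁻ z, ENNReal.ofReal (f z) ∂(κ y) < ∞ := by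
    filter_upwards [hae] with y hy
    exact lt_of_le_of_lt (lintegral_mono hple) hy
  have haeQ : ∀ᵐ y ∂μ, ∫⁻ z, ENNReal.ofReal (-f z) ∂(κ y) < ∞ := by
    filter_upwards [hae] with y hy
    exact lt_of_le_of_lt (lintegral_mono hqle) hy
  rw [integral_eq_lintegral_pos_part_sub_lintegral_neg_part hint,
    Measure.lintegral_bind hκ.aemeasurable hpm.aemeasurable, Measure.lintegral_bind hκ.aemeasurable hqm.aemeasurable,
    integral_congr_ae hinner, integral_sub hIP hIQ,
    integral_toReal hPmeas'.aemeasurable haeP,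
    integral_toReal hQmeas'.aemeasurable haeQ]

/-- Assume `⦀P^n − π⦀_V ≤ ρ^n` for all `n` (Assumption (A) with the constant
absorbed).  Then for every `k ≥ 2`,
`⦀L^(a_k) − π⦀_V ≤ exp(−u_k) ⦀L^(a_{k−1}) − π⦀_V`,
where `u_k = log(a_k) − log(c + a_{k−1})` and `c = 1/(1−ρ)`.  The `V`-norms are expressed by
testing against all measurable `f` with `|f|_V ≤ 1`: `B` is any upper bound for
`⦀L^(a_{k−1}) − π⦀_V`. -/
theorem vnorm_contraction_at_resampling_times
    (P : X → Measure X) (hPmeas : Measurable P)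
    (hPprob : ∀ x, IsProbabilityMeasure (P x))
    (π : Measure X) (hπ : IsProbabilityMeasure π) (hinv : π.bind P = π)
    (V : X → ℝ) (hVmeas : Measurable V) (hV1 : ∀ x, 1 ≤ V x)
    (ρ : ℝ) (hρ0 : 0 < ρ) (hρ1 : ρ < 1)
    -- Assumption (A) with the constant absorbed: `⦀P^n − π⦀_V ≤ ρ^n` for all `n ≥ 0`
    (hA : ∀ f : X → ℝ, Measurable f → (∀ x, |f x| ≤ V x) →
      ∀ (n : ℕ) (x : X),
        |∫ y, f y ∂(iter P n x) - ∫ y, f y ∂π| ≤ ρ ^ n * V x)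
    -- the resampling schedule: a strictly increasing sequence of positive integers
    (a : ℕ → ℕ) (ha1 : 1 ≤ a 1) (hamono : ∀ k, 1 ≤ k → a k < a (k + 1))
    -- the laws `L^(n)(x,·)` of the chain with resampling from the past, burn-in 0
    (L : ℕ → X → Measure X)
    (hL0 : ∀ x, L 0 x = Measure.dirac x)
    (hLstep : ∀ n : ℕ, 1 ≤ n → (¬ ∃ k, 1 ≤ k ∧ a k = n) →
      ∀ x, L n x = (L (n - 1) x).bind P)
    (hLres : ∀ k, 1 ≤ k →
      ∀ x, L (a k) x = ((a k : ℝ≥0∞))⁻¹ • ∑ j ∈ Finset.range (a k), L j x) :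
    ∀ k : ℕ, 2 ≤ k →
      ∀ B : ℝ,
        -- `⦀L^(a_{k−1}) − π⦀_V ≤ B`
        (∀ f : X → ℝ, Measurable f → (∀ x, |f x| ≤ V x) →
          ∀ x, |∫ y, f y ∂(L (a (k - 1)) x) - ∫ y, f y ∂π| ≤ B * V x) →
        -- conclusion: `⦀L^(a_k) − π⦀_V ≤ exp(−u_k) B`
        ∀ f : X → ℝ, Measurable f → (∀ x, |f x| ≤ V x) →
          ∀ x, |∫ y, f y ∂(L (a k) x) - ∫ y, f y ∂π| ≤
            Real.exp (-(Real.log (a k : ℝ) -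
              Real.log (1 / (1 - ρ) + (a (k - 1) : ℝ)))) * B * V x := by
  intro k hk B hB f hf hfV x
  set W : X → ℝ≥0∞ := fun z => ENNReal.ofReal (V z) with hW
  have hWmeas : Measurable W := hVmeas.ennreal_ofReal
  have hWne : ∀ z, W z ≠ ∞ := fun z => ENNReal.ofReal_ne_top
  -- truncations
  have hfN_meas : ∀ N : ℕ, Measurable (fun z => min (V z) (N : ℝ)) :=
    fun N => hVmeas.min measurable_const
  have hfN_nonneg : ∀ (N : ℕ) (z : X), 0 ≤ min (V z) (N : ℝ) :=
    fun N z => le_min (zero_le_one.trans (hV1 z)) (Nat.cast_nonneg N)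
  have hfN_le : ∀ (N : ℕ) (z : X), |min (V z) (N : ℝ)| ≤ V z := fun N z => by
    rw [abs_of_nonneg (hfN_nonneg N z)]; exact min_le_left _ _
  have hfN_int : ∀ (N : ℕ) (ν : Measure X), IsProbabilityMeasure ν →
      Integrable (fun z => min (V z) (N : ℝ)) ν := by
    intro N ν hν
    haveI := hν
    refine (integrable_const (N : ℝ)).mono' (hfN_meas N).aestronglyMeasurable ?_
    filter_upwards with z
    rw [Real.norm_eq_abs, abs_of_nonneg (hfN_nonneg N z)]
    exact min_le_right _ _
  have hofmin : ∀ (N : ℕ) (z : X),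
      ENNReal.ofReal (min (V z) (N : ℝ)) = min (W z) (N : ℝ≥0∞) := by
    intro N z
    rcases le_total (V z) (N : ℝ) with h | h
    · rw [min_eq_left h, min_eq_left]
      rw [← ENNReal.ofReal_natCast]
      exact ENNReal.ofReal_le_ofReal h
    · rw [min_eq_right h, min_eq_right, ENNReal.ofReal_natCast]
      rw [← ENNReal.ofReal_natCast]
      exact ENNReal.ofReal_le_ofReal h
  have keylim : ∀ (ν : Measure X), IsProbabilityMeasure ν → ∀ c : ℝ,
      (∀ N : ℕ, ∫ z, min (V z) (N : ℝ) ∂ν ≤ c) → ∫⁻ z, W z ∂ν ≤ ENNReal.ofReal c := by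
    intro ν hν c hc
    have hstep : ∀ N : ℕ, ∫⁻ z, min (W z) (N : ℝ≥0∞) ∂ν ≤ ENNReal.ofReal c := by
      intro N
      have : ∫⁻ z, min (W z) (N : ℝ≥0∞) ∂ν
          = ENNReal.ofReal (∫ z, min (V z) (N : ℝ) ∂ν) := by
        rw [ofReal_integral_eq_lintegral_ofReal (hfN_int N ν hν)
          (Eventually.of_forall (hfN_nonneg N))]
        exact lintegral_congr fun z => (hofmin N z).symm
      rw [this]
      exact ENNReal.ofReal_le_ofReal (hc N)
    have hmono : Monotone fun (N : ℕ) (z : X) => min (W z) (N : ℝ≥0∞) := by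
      intro i j hij z
      exact min_le_min le_rfl (by exact_mod_cast Nat.cast_le.mpr hij)
    have hsup : ∀ z, ⨆ N : ℕ, min (W z) (N : ℝ≥0∞) = W z := by
      intro z
      obtain ⟨N, hN⟩ := ENNReal.exists_nat_gt (hWne z)
      refine le_antisymm (iSup_le fun _ => min_le_left _ _) (le_iSup_of_le N ?_)
      rw [min_eq_left hN.le]
    calc ∫⁻ z, W z ∂ν = ∫⁻ z, ⨆ N : ℕ, min (W z) (N : ℝ≥0∞) ∂ν :=
          lintegral_congr fun z => (hsup z).symm
      _ = ⨆ N : ℕ, ∫⁻ z, min (W z) (N : ℝ≥0∞) ∂ν :=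
          lintegral_iSup (fun N => hWmeas.min measurable_const) hmono
      _ ≤ ENNReal.ofReal c := iSup_le hstep
  -- π-integrability of V
  set Cπ : ℝ≥0∞ := ∫⁻ z, W z ∂π with hCπdef
  have hπfin : Cπ ≤ ENNReal.ofReal (2 * V x) := by
    refine keylim π hπ _ (fun N => ?_)
    have h := hA (fun z => min (V z) (N : ℝ)) (hfN_meas N) (hfN_le N) 0 x
    rw [pow_zero, one_mul] at h
    have hdir : ∫ z, min (V z) (N : ℝ) ∂(iter P 0 x) = min (V x) (N : ℝ) := by
      simp only [iter]
      exact integral_dirac' _ _ (hfN_meas N).stronglyMeasurable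
    rw [hdir] at h
    have h1 : ∫ z, min (V z) (N : ℝ) ∂π ≤ min (V x) (N : ℝ) + V x := by
      have := abs_le.mp h
      linarith [this.1]
    have h2 : min (V x) (N : ℝ) ≤ V x := min_le_left _ _
    linarith
  have hCπ : Cπ ≠ ∞ := (lt_of_le_of_lt hπfin ENNReal.ofReal_lt_top).ne
  have hπint : ∀ N : ℕ, ∫ z, min (V z) (N : ℝ) ∂π ≤ Cπ.toReal := by
    intro N
    have : ENNReal.ofReal (∫ z, min (V z) (N : ℝ) ∂π) ≤ Cπ := by
      rw [ofReal_integral_eq_lintegral_ofReal (hfN_int N π hπ)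
        (Eventually.of_forall (hfN_nonneg N))]
      exact lintegral_mono fun z => by
        rw [hofmin N z]; exact min_le_left _ _
    exact (ENNReal.ofReal_le_iff_le_toReal hCπ).mp this
  -- lintegral of W along iterates
  have hiterfin : ∀ (m : ℕ) (y : X), ∫⁻ z, W z ∂(iter P m y) ≤ Cπ + W y := by
    intro m y
    have hb : ∀ N : ℕ, ∫ z, min (V z) (N : ℝ) ∂(iter P m y) ≤ Cπ.toReal + V y := by
      intro N
      have h := hA (fun z => min (V z) (N : ℝ)) (hfN_meas N) (hfN_le N) m y
      have hρm : ρ ^ m ≤ 1 := pow_le_one₀ hρ0.le hρ1.le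
      have hVy : 0 < V y := lt_of_lt_of_le zero_lt_one (hV1 y)
      have : ρ ^ m * V y ≤ V y := by nlinarith
      have h' := (abs_le.mp h).2
      have := hπint N
      linarith
    have := keylim (iter P m y) (isProbabilityMeasure_iter hPmeas hPprob m y) _ hb
    rwa [ENNReal.ofReal_add ENNReal.toReal_nonneg (zero_le_one.trans (hV1 y)),
      ENNReal.ofReal_toReal hCπ] at this
  have hiterfin' : ∀ (m : ℕ) (y : X), ∫⁻ z, W z ∂(iter P m y) ≠ ∞ := fun m y =>
    (lt_of_le_of_lt (hiterfin m y)
      (ENNReal.add_lt_top.mpr ⟨hCπ.lt_top, (hWne y).lt_top⟩)).ne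
  have hPfinW : ∀ y : X, ∫⁻ z, W z ∂(P y) ≤ Cπ + W y := by
    intro y
    have h := hiterfin 1 y
    have : iter P 1 y = P y := by
      simp only [iter]
      exact Measure.dirac_bind hPmeas y
    rwa [this] at h
  -- probability and finiteness for L
  have hLprob : ∀ n, ∀ y, IsProbabilityMeasure (L n y) := by
    intro n
    induction n using Nat.strong_induction_on with
    | _ n ih =>
      intro y
      rcases Nat.eq_zero_or_pos n with h0 | hpos
      · subst h0; rw [hL0]; infer_instance
      by_cases hres : ∃ k', 1 ≤ k' ∧ a k' = n
      · obtain ⟨k', hk1, hk2⟩ := hres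
        rw [← hk2] at hpos ⊢
        rw [hLres k' hk1 y]
        constructor
        rw [Measure.smul_apply, Measure.finset_sum_apply, smul_eq_mul]
        have hone : ∀ j ∈ Finset.range (a k'), (L j y) Set.univ = 1 := by
          intro j hj
          have hj' : j < n := hk2 ▸ Finset.mem_range.mp hj
          exact (ih j hj' y).measure_univ
        rw [Finset.sum_congr rfl hone, Finset.sum_const, Finset.card_range, nsmul_eq_mul,
          mul_one]
        exact ENNReal.inv_mul_cancel (by exact_mod_cast hpos.ne') (ENNReal.natCast_ne_top _)
      · rw [hLstep n hpos hres y]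
        exact isProbabilityMeasure_bind hPmeas hPprob (ih (n - 1) (by omega) y)
  have hLfin : ∀ n, ∀ y, ∫⁻ z, W z ∂(L n y) ≠ ∞ := by
    intro n
    induction n using Nat.strong_induction_on with
    | _ n ih =>
      intro y
      rcases Nat.eq_zero_or_pos n with h0 | hpos
      · subst h0; rw [hL0, lintegral_dirac' _ hWmeas]; exact hWne y
      by_cases hres : ∃ k', 1 ≤ k' ∧ a k' = n
      · obtain ⟨k', hk1, hk2⟩ := hres
        rw [← hk2] at hpos ⊢
        rw [hLres k' hk1 y, lintegral_smul_measure, lintegral_finset_sum_measure]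
        refine ENNReal.mul_ne_top (ENNReal.inv_ne_top.mpr (by exact_mod_cast hpos.ne')) ?_
        refine (ENNReal.sum_lt_top.mpr fun j hj => ?_).ne
        exact (ih j (hk2 ▸ Finset.mem_range.mp hj) y).lt_top
      · rw [hLstep n hpos hres y, Measure.lintegral_bind hPmeas.aemeasurable hWmeas.aemeasurable]
        have hb : ∫⁻ y', ∫⁻ z, W z ∂(P y') ∂(L (n - 1) y) ≤
            ∫⁻ y', (Cπ + W y') ∂(L (n - 1) y) :=
          lintegral_mono fun y' => hPfinW y'
        refine (lt_of_le_of_lt hb ?_).ne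
        rw [lintegral_add_left measurable_const, lintegral_const]
        haveI := hLprob (n - 1) y
        rw [measure_univ, mul_one]
        exact ENNReal.add_lt_top.mpr ⟨hCπ.lt_top, (ih (n - 1) (by omega) y).lt_top⟩
  -- monotonicity of the schedule
  have hmono2 : ∀ i j, 1 ≤ i → i ≤ j → a i ≤ a j := by
    intro i j h1 hij
    induction j with
    | zero => omega
    | succ j ihj =>
      rcases Nat.lt_succ_iff_lt_or_eq.mp (Nat.lt_succ_of_le hij) with h | h
      · exact le_trans (ihj (by omega)) (hamono j (by omega)).le
      · exact le_of_eq (congrArg a h)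

  -- the two resampling times
  have hk1 : 1 ≤ k - 1 := by omega
  have hkk : k - 1 + 1 = k := by omega
  have haA : a (k - 1) < a k := by
    have := hamono (k - 1) hk1
    rwa [hkk] at this
  have ha'1 : 1 ≤ a (k - 1) := le_trans ha1 (hmono2 1 (k - 1) le_rfl hk1)
  have hA1 : 1 ≤ a k := le_trans ha'1 haA.le
  have hnores : ∀ n, a (k - 1) < n → n < a k → ¬ ∃ k', 1 ≤ k' ∧ a k' = n := by
    rintro n h1 h2 ⟨k', hk'1, rfl⟩
    rcases le_or_gt k' (k - 1) with h | h
    · exact absurd (hmono2 k' (k - 1) hk'1 h) (by omega)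
    · exact absurd (hmono2 k k' (by omega) (by omega)) (by omega)
  -- block decomposition
  have hblock : ∀ m, a (k - 1) + m < a k →
      L (a (k - 1) + m) x = (L (a (k - 1)) x).bind (iter P m) := by
    intro m
    induction m with
    | zero =>
      intro _
      simp only [Nat.add_zero, iter]
      exact Measure.bind_dirac.symm
    | succ m ihm =>
      intro hm
      have h1 : a (k - 1) + m < a k := by omega
      have hstep : L (a (k - 1) + (m + 1)) x = (L (a (k - 1) + m) x).bind P := by
        have := hLstep (a (k - 1) + m + 1) (by omega)
          (hnores _ (by omega) (by omega)) x
        rw [show a (k - 1) + m + 1 - 1 = a (k - 1) + m by omega] at this; exact this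
      rw [hstep, ihm h1, Measure.bind_bind (measurable_iter P hPmeas m).aemeasurable hPmeas.aemeasurable]
      rfl
  -- invariance of π under the iterates
  have hπinv : ∀ m, π.bind (iter P m) = π := by
    intro m
    induction m with
    | zero => exact Measure.bind_dirac
    | succ m ihm =>
      have : π.bind (iter P (m + 1)) = (π.bind (iter P m)).bind P :=
        (Measure.bind_bind (measurable_iter P hPmeas m).aemeasurable hPmeas.aemeasurable).symm
      rw [this, ihm, hinv]
  -- enormous norm bound and integrability helpers
  have henorm : ∀ (g : X → ℝ), (∀ z, |g z| ≤ V z) →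
      ∀ z, (‖g z‖₊ : ℝ≥0∞) ≤ W z := by
    intro g hgV z
    rw [← enorm_eq_nnnorm, ← ofReal_norm, Real.norm_eq_abs]
    exact ENNReal.ofReal_le_ofReal (hgV z)
  have hint : ∀ (g : X → ℝ), Measurable g → (∀ z, |g z| ≤ V z) →
      ∀ (ν : Measure X), ∫⁻ z, W z ∂ν ≠ ∞ → Integrable g ν := by
    intro g hg hgV ν hν
    exact ⟨hg.aestronglyMeasurable,
      lt_of_le_of_lt (lintegral_mono (henorm g hgV)) hν.lt_top⟩
  have hVintπ : Integrable V π :=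
    hint V hVmeas (fun z => by rw [abs_of_nonneg (zero_le_one.trans (hV1 z))]) π hCπ
  have hVintL : Integrable V (L (a (k - 1)) x) :=
    hint V hVmeas (fun z => by rw [abs_of_nonneg (zero_le_one.trans (hV1 z))]) _
      (hLfin (a (k - 1)) x)
  have hdoublefin : ∀ (ν : Measure X), IsProbabilityMeasure ν → ∫⁻ z, W z ∂ν ≠ ∞ → ∀ m : ℕ,
      ∫⁻ y, ∫⁻ z, (‖f z‖₊ : ℝ≥0∞) ∂(iter P m y) ∂ν ≠ ∞ := by
    intro ν hνp hν m
    haveI := hνp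
    have hb : ∫⁻ y, ∫⁻ z, (‖f z‖₊ : ℝ≥0∞) ∂(iter P m y) ∂ν ≤ ∫⁻ y, (Cπ + W y) ∂ν :=
      lintegral_mono fun y =>
        le_trans (lintegral_mono (henorm f hfV)) (hiterfin m y)
    refine (lt_of_le_of_lt hb ?_).ne
    rw [lintegral_add_left measurable_const, lintegral_const]
    exact ENNReal.add_lt_top.mpr ⟨ENNReal.mul_lt_top hCπ.lt_top (measure_lt_top ν _),
      hν.lt_top⟩
  -- per-term bound on the block
  have hterm : ∀ m, a (k - 1) + m < a k →
      |∫ z, f z ∂(L (a (k - 1) + m) x) - ∫ z, f z ∂π| ≤ ρ ^ m * (B * V x) := by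
    intro m hm
    have hintf_iter : ∀ y, Integrable f (iter P m y) :=
      fun y => hint f hf hfV _ (hiterfin' m y)
    have hhmeas : Measurable fun y => ∫ z, f z ∂(iter P m y) := by
      have heq : (fun y => ∫ z, f z ∂(iter P m y)) = fun y =>
          (∫⁻ z, ENNReal.ofReal (f z) ∂(iter P m y)).toReal -
          (∫⁻ z, ENNReal.ofReal (-f z) ∂(iter P m y)).toReal :=
        funext fun y =>
          integral_eq_lintegral_pos_part_sub_lintegral_neg_part (hintf_iter y)
      rw [heq]
      exact ((ENNReal.measurable_toReal.comp
          ((Measure.measurable_lintegral hf.ennreal_ofReal).comp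
            (measurable_iter P hPmeas m))).sub
        (ENNReal.measurable_toReal.comp
          ((Measure.measurable_lintegral hf.neg.ennreal_ofReal).comp
            (measurable_iter P hPmeas m))))
    have hρm : (0 : ℝ) < ρ ^ m := pow_pos hρ0 m
    set g : X → ℝ := fun y => (ρ ^ m)⁻¹ * ((∫ z, f z ∂(iter P m y)) - ∫ z, f z ∂π)
      with hgdef
    have hgmeas : Measurable g := (hhmeas.sub measurable_const).const_mul _
    have hgV : ∀ y, |g y| ≤ V y := by
      intro y
      rw [hgdef]
      simp only
      rw [abs_mul, abs_inv, abs_of_pos hρm, inv_mul_le_iff₀ hρm]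
      exact hA f hf hfV m y
    have hBg := hB g hgmeas hgV x
    -- h is integrable
    have hhbound : ∀ (ν : Measure X), IsProbabilityMeasure ν → ∫⁻ z, W z ∂ν ≠ ∞ →
        Integrable (fun y => ∫ z, f z ∂(iter P m y)) ν := by
      intro ν hνp hν
      haveI := hνp
      refine ((hint V hVmeas
        (fun z => by rw [abs_of_nonneg (zero_le_one.trans (hV1 z))]) ν hν).add
        (integrable_const |∫ z, f z ∂π|)).mono' hhmeas.aestronglyMeasurable ?_
      filter_upwards with y
      have := hA f hf hfV m y
      have h1 := (abs_le.mp this).1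
      have h2 := (abs_le.mp this).2
      have hρm1 : ρ ^ m ≤ 1 := pow_le_one₀ hρ0.le hρ1.le
      have hVy : 0 < V y := lt_of_lt_of_le zero_lt_one (hV1 y)
      have hprod : ρ ^ m * V y ≤ V y := by nlinarith
      simp only [Pi.add_apply]
      rw [Real.norm_eq_abs, abs_le]
      constructor
      · linarith [neg_abs_le (∫ z, f z ∂π)]
      · linarith [le_abs_self (∫ z, f z ∂π)]
    have hπh : ∫ y, (∫ z, f z ∂(iter P m y)) ∂π = ∫ z, f z ∂π := by
      have h := integral_bind (μ := π) (measurable_iter P hPmeas m) hf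
        (hdoublefin π hπ hCπ m)
      rw [hπinv m] at h
      exact h.symm
    have hgπ : ∫ y, g y ∂π = 0 := by
      rw [hgdef]
      simp only
      rw [integral_const_mul, integral_sub (hhbound π hπ hCπ) (integrable_const _), hπh,
        integral_const]
      haveI := hπ
      rw [probReal_univ]
      simp
    have hLh : ∫ y, (∫ z, f z ∂(iter P m y)) ∂(L (a (k - 1)) x) =
        ∫ z, f z ∂(L (a (k - 1) + m) x) := by
      rw [hblock m hm]
      exact (integral_bind (measurable_iter P hPmeas m) hf
        (hdoublefin _ (hLprob (a (k - 1)) x) (hLfin (a (k - 1)) x) m)).symm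
    have hgL : ∫ y, g y ∂(L (a (k - 1)) x) =
        (ρ ^ m)⁻¹ * (∫ z, f z ∂(L (a (k - 1) + m) x) - ∫ z, f z ∂π) := by
      rw [hgdef]
      simp only
      rw [integral_const_mul,
        integral_sub (hhbound _ (hLprob (a (k - 1)) x) (hLfin (a (k - 1)) x)) (integrable_const _), hLh,
        integral_const]
      haveI := hLprob (a (k - 1)) x
      rw [probReal_univ]
      simp
    rw [hgL, hgπ, sub_zero, abs_mul, abs_inv, abs_of_pos hρm,
      inv_mul_le_iff₀ hρm] at hBg
    exact hBg
  -- nonnegativity of B * V x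
  have hBVx : 0 ≤ B * V x := by
    have h0 := hB (fun _ => 0) measurable_const
      (fun z => by simpa using (zero_le_one.trans (hV1 z))) x
    simpa using h0
  -- geometric sum bound
  have h1ρ : (0 : ℝ) < 1 - ρ := by linarith
  have hgeom : ∑ m ∈ Finset.range (a k - a (k - 1)), ρ ^ m ≤ (1 - ρ)⁻¹ := by
    rw [geom_sum_eq hρ1.ne (a k - a (k - 1))]
    rw [div_le_iff_of_neg (by linarith : ρ - 1 < 0)]
    have he : (1 - ρ)⁻¹ * (ρ - 1) = -1 := by
      field_simp
      ring
    rw [he]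
    nlinarith [pow_nonneg hρ0.le (a k - a (k - 1))]
  -- integral over the resampled law as an average
  have hIA : ∫ z, f z ∂(L (a k) x) =
      (a k : ℝ)⁻¹ * ∑ j ∈ Finset.range (a k), ∫ z, f z ∂(L j x) := by
    rw [hLres k (by omega) x, integral_smul_measure,
      integral_finset_sum_measure (fun j _ => hint f hf hfV _ (hLfin j x))]
    rw [ENNReal.toReal_inv, ENNReal.toReal_natCast, smul_eq_mul]
  have hressum : ∑ j ∈ Finset.range (a (k - 1)), ∫ z, f z ∂(L j x) =
      (a (k - 1) : ℝ) * ∫ z, f z ∂(L (a (k - 1)) x) := by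
    have h : ∫ z, f z ∂(L (a (k - 1)) x) =
        (a (k - 1) : ℝ)⁻¹ * ∑ j ∈ Finset.range (a (k - 1)), ∫ z, f z ∂(L j x) := by
      rw [hLres (k - 1) hk1 x, integral_smul_measure,
        integral_finset_sum_measure (fun j _ => hint f hf hfV _ (hLfin j x))]
      rw [ENNReal.toReal_inv, ENNReal.toReal_natCast, smul_eq_mul]
    rw [h, ← mul_assoc, mul_inv_cancel₀ (by exact_mod_cast (by omega : a (k - 1) ≠ 0) : (a (k - 1) : ℝ) ≠ 0),
      one_mul]
  have hsplit : ∑ j ∈ Finset.range (a k), ∫ z, f z ∂(L j x) =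
      (a (k - 1) : ℝ) * ∫ z, f z ∂(L (a (k - 1)) x) +
      ∑ m ∈ Finset.range (a k - a (k - 1)), ∫ z, f z ∂(L (a (k - 1) + m) x) := by
    rw [← Finset.sum_range_add_sum_Ico _ haA.le, hressum, Finset.sum_Ico_eq_sum_range]
  have hAne : (a k : ℝ) ≠ 0 := by
    exact_mod_cast (by omega : a k ≠ 0)
  have key : ∫ z, f z ∂(L (a k) x) - ∫ z, f z ∂π =
      (a k : ℝ)⁻¹ * ((a (k - 1) : ℝ) * (∫ z, f z ∂(L (a (k - 1)) x) - ∫ z, f z ∂π) +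
        ∑ m ∈ Finset.range (a k - a (k - 1)),
          (∫ z, f z ∂(L (a (k - 1) + m) x) - ∫ z, f z ∂π)) := by
    rw [Finset.sum_sub_distrib, Finset.sum_const, Finset.card_range, nsmul_eq_mul,
      Nat.cast_sub haA.le, hIA, hsplit]
    field_simp
    ring
  -- final bound
  have hAbs : |∫ z, f z ∂(L (a k) x) - ∫ z, f z ∂π| ≤
      (a k : ℝ)⁻¹ * (((a (k - 1) : ℝ) + (1 - ρ)⁻¹) * (B * V x)) := by
    rw [key, abs_mul, abs_of_nonneg (inv_nonneg.mpr (Nat.cast_nonneg (a k)))]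
    refine mul_le_mul_of_nonneg_left ?_ (inv_nonneg.mpr (Nat.cast_nonneg (a k)))
    calc |(a (k - 1) : ℝ) * (∫ z, f z ∂(L (a (k - 1)) x) - ∫ z, f z ∂π) +
          ∑ m ∈ Finset.range (a k - a (k - 1)),
            (∫ z, f z ∂(L (a (k - 1) + m) x) - ∫ z, f z ∂π)|
        ≤ |(a (k - 1) : ℝ) * (∫ z, f z ∂(L (a (k - 1)) x) - ∫ z, f z ∂π)| +
          |∑ m ∈ Finset.range (a k - a (k - 1)),
            (∫ z, f z ∂(L (a (k - 1) + m) x) - ∫ z, f z ∂π)| := abs_add_le _ _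
      _ ≤ (a (k - 1) : ℝ) * (B * V x) + (1 - ρ)⁻¹ * (B * V x) := by
          refine add_le_add ?_ ?_
          · rw [abs_mul, Nat.abs_cast]
            exact mul_le_mul_of_nonneg_left (hB f hf hfV x) (Nat.cast_nonneg _)
          · refine le_trans (Finset.abs_sum_le_sum_abs _ _) ?_
            calc ∑ m ∈ Finset.range (a k - a (k - 1)),
                  |∫ z, f z ∂(L (a (k - 1) + m) x) - ∫ z, f z ∂π|
                ≤ ∑ m ∈ Finset.range (a k - a (k - 1)), ρ ^ m * (B * V x) := by
                  refine Finset.sum_le_sum fun m hm => ?_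
                  exact hterm m (by
                    have := Finset.mem_range.mp hm
                    omega)
              _ = (∑ m ∈ Finset.range (a k - a (k - 1)), ρ ^ m) * (B * V x) := by
                  rw [Finset.sum_mul]
              _ ≤ (1 - ρ)⁻¹ * (B * V x) := mul_le_mul_of_nonneg_right hgeom hBVx
      _ = ((a (k - 1) : ℝ) + (1 - ρ)⁻¹) * (B * V x) := by ring
  -- rewrite the exponential factor
  have hApos : (0 : ℝ) < (a k : ℝ) := by exact_mod_cast (by omega : 0 < a k)
  have hcpos : (0 : ℝ) < 1 / (1 - ρ) + (a (k - 1) : ℝ) := by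
    have h1 : (0 : ℝ) < 1 / (1 - ρ) := by positivity
    have h2 : (0 : ℝ) ≤ (a (k - 1) : ℝ) := Nat.cast_nonneg _
    linarith
  have hexp : Real.exp (-(Real.log (a k : ℝ) -
      Real.log (1 / (1 - ρ) + (a (k - 1) : ℝ)))) =
      (1 / (1 - ρ) + (a (k - 1) : ℝ)) / (a k : ℝ) := by
    rw [neg_sub, Real.exp_sub, Real.exp_log hcpos, Real.exp_log hApos]
  rw [hexp]
  calc |∫ y, f y ∂(L (a k) x) - ∫ y, f y ∂π|
      ≤ (a k : ℝ)⁻¹ * (((a (k - 1) : ℝ) + (1 - ρ)⁻¹) * (B * V x)) := hAbs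
    _ = (1 / (1 - ρ) + (a (k - 1) : ℝ)) / (a k : ℝ) * B * V x := by
        field_simp
        ring


end ResamplingContraction
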